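/- Performing multiple repairs on the same chain is order-independent when the repairs target distinct blocks and each repair proposal prescribes the full new state: applying repairChain for proposals rp_i (for block i) and rp_j (for block j, i ≠ j) in either order yields the same final chain, provided the proposals' prescribed states are consistent (the later-applied proposal's state recomputation via δ absorbs the earlier change). -/

import Mathlib

section Reparo

variable {TX St : Type}

/-- Replace the transactions of block `j` (leaving the recorded state to be
recomputed). -/
def setTx : List (TX × St) → ℕ → TX → List (TX × St)
  | [], _, _ => []
  | b :: rest, 0, t => (t, b.2) :: rest
  | b :: rest, n + 1, t => b :: setTx rest n t

/-- Recompute all states of the chain from a previous state via `δ`. -/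
def restate (δ : St → TX → St) : St → List (TX × St) → List (TX × St)
  | _, [] => []
  | s, (t, _) :: rest =>
    let s' := δ s t
    (t, s') :: restate δ s' rest

/-- `repairChain`: replace block `j`'s transactions by the proposal's
transactions and recompute all subsequent states via `δ`. -/
def repairChain (δ : St → TX → St) (s0 : St)
    (C : List (TX × St)) (j : ℕ) (t : TX) : List (TX × St) :=
  restate δ s0 (setTx C j t)

lemma restate_map_fst (δ : St → TX → St) (s : St) (L : List (TX × St)) :
    (restate δ s L).map Prod.fst = L.map Prod.fst := by
  induction L generalizing s with
  | nil => rfl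
  | cons b rest ih =>
    obtain ⟨t, st⟩ := b
    simp [restate, ih]

lemma setTx_map_fst (L : List (TX × St)) (j : ℕ) (t : TX) :
    (setTx L j t).map Prod.fst = (L.map Prod.fst).set j t := by
  induction L generalizing j with
  | nil => rfl
  | cons b rest ih =>
    cases j with
    | zero => rfl
    | succ n => simp [setTx, ih]

lemma restate_eq_of_map_fst (δ : St → TX → St) (s : St) (L M : List (TX × St))
    (h : L.map Prod.fst = M.map Prod.fst) : restate δ s L = restate δ s M := by
  induction L generalizing s M with
  | nil => cases M <;> simp_all
  | cons b rest ih =>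
    cases M with
    | nil => simp_all
    | cons c restM =>
      obtain ⟨t, st⟩ := b
      obtain ⟨t', st'⟩ := c
      simp only [List.map_cons, List.cons.injEq] at h
      obtain ⟨rfl, h2⟩ := h
      simp [restate, ih _ _ h2]

/-- Repairs targeting distinct blocks are order-independent: applying the
repairs for blocks `i` and `j` (with `i < j`, the proposal for `j` computed
relative to the chain already repaired at `i`, its state being recomputed via
`δ`) in either order yields the same final chain. -/
theorem repairs_commute
    (δ : St → TX → St) (s0 : St) (C : List (TX × St))
    (i j : ℕ) (hij : i < j) (ti tj : TX) :
    repairChain δ s0 (repairChain δ s0 C i ti) j tj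
      = repairChain δ s0 (repairChain δ s0 C j tj) i ti := by
  unfold repairChain
  apply restate_eq_of_map_fst
  simp only [setTx_map_fst, restate_map_fst]
  exact List.set_comm _ _ hij.ne

end Reparo
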